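/- arXiv:2512.00467 — 2 statements merged into one kernel-verified Lean document; each statement's English description precedes it below -/
import Mathlib

section
/- For the velocity coordination system in ℝ^m, the minimal convex hull Ξ(t) of the set of agent states {v_1(t),…,v_n(t)} is non-expanding: for all t ≥ 0 and δ > 0, Ξ(t+δ) ⊆ Ξ(t). -/
open Finset Filter Topology Set

/-- If each `f i` is differentiable with derivative `f' i`, and at every point the
derivative of every maximizer is nonpositive, then the pointwise `sup'` is non-increasing. -/
lemma sup'_le_of_deriv_nonpos_at_max {ι : Type*} (s : Finset ι) (hs : s.Nonempty)
    (f : ι → ℝ → ℝ) (f' : ι → ℝ → ℝ)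
    (hderiv : ∀ i x, HasDerivAt (f i) (f' i x) x)
    (hmax : ∀ x, ∀ i ∈ s, (∀ j ∈ s, f j x ≤ f i x) → f' i x ≤ 0)
    {a b : ℝ} (hab : a ≤ b) :
    s.sup' hs (fun i => f i b) ≤ s.sup' hs (fun i => f i a) := by
  set φ : ℝ → ℝ := fun x => s.sup' hs (fun i => f i x) with hφ
  have hcont : Continuous φ := by
    rw [continuous_iff_continuousAt]
    intro x
    exact ContinuousAt.finset_sup'_apply hs fun i _ => (hderiv i x).continuousAt
  have key : ∀ ⦃x⦄, x ∈ Set.Icc a b → φ x ≤ (fun _ => φ a) x := by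
    apply image_le_of_liminf_slope_right_le_deriv_boundary (B := fun _ => φ a)
      (B' := fun _ => (0:ℝ)) hcont.continuousOn le_rfl continuousOn_const
      (fun x _ => by simpa using hasDerivWithinAt_const x (Set.Ici x) (φ a))
    intro x hx r hr
    -- show: frequently slope φ x z < r for z → x⁺
    have hev : ∀ᶠ z in 𝓝[>] x, slope φ x z < r := by
      have hall : ∀ᶠ z in 𝓝[>] x, ∀ i ∈ s, f i z < φ x + r * (z - x) := by
        rw [eventually_all_finset]
        intro i hi
        by_cases hieq : f i x = φ x
        · -- i is a maximizer: use derivative bound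
          have himax : ∀ j ∈ s, f j x ≤ f i x := by
            intro j hj; rw [hieq]; exact Finset.le_sup' (fun k => f k x) hj
          have hle : f' i x ≤ 0 := hmax x i hi himax
          have hts : Tendsto (slope (f i) x) (𝓝[>] x) (𝓝 (f' i x)) :=
            (hasDerivAt_iff_tendsto_slope.1 (hderiv i x)).mono_left
              (nhdsWithin_mono x fun z hz => ne_of_gt hz)
          have : ∀ᶠ z in 𝓝[>] x, slope (f i) x z < r :=
            hts.eventually_lt_const (lt_of_le_of_lt hle hr)
          filter_upwards [this, self_mem_nhdsWithin] with z hz hzx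
          have hzx' : (0:ℝ) < z - x := sub_pos.2 hzx
          rw [slope_def_field, div_lt_iff₀ hzx'] at hz
          calc f i z = f i x + (f i z - f i x) := by ring
            _ < f i x + r * (z - x) := by linarith
            _ = φ x + r * (z - x) := by rw [hieq]
        · -- f i x < φ x : continuity suffices
          have hlt : f i x < φ x :=
            lt_of_le_of_ne (Finset.le_sup' (fun k => f k x) hi) hieq
          have : ∀ᶠ z in 𝓝 x, f i z < φ x :=
            (hderiv i x).continuousAt.eventually_lt_const hlt
          filter_upwards [nhdsWithin_le_nhds this, self_mem_nhdsWithin] with z hz hzx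
          have : (0:ℝ) < r * (z - x) := mul_pos hr (sub_pos.2 hzx)
          linarith
      filter_upwards [hall, self_mem_nhdsWithin] with z hz hzx
      have hzx' : (0:ℝ) < z - x := sub_pos.2 hzx
      rw [slope_def_field, div_lt_iff₀ hzx']
      have : φ z < φ x + r * (z - x) := by
        rw [hφ]
        exact Finset.sup'_lt_iff hs |>.2 fun i hi => hz i hi
      linarith
    exact hev.frequently
  exact key ⟨hab, le_rfl⟩

/-- For the velocity coordination system in `ℝ^m`, the convex hull of the agents'
states is non-expanding: for `t ≥ 0` and `δ > 0`, `Ξ(t+δ) ⊆ Ξ(t)`.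
(The coupling term is interpreted as `0` when `vᵢ = vⱼ`, which is Lean's convention
for division by zero combined with `gᵢⱼ(0) = 0`.) -/
theorem convex_hull_nonexpanding
    (m n : ℕ)
    (v : ℝ → Fin n → EuclideanSpace ℝ (Fin m))
    (N : ℝ → Fin n → Finset (Fin n))
    (g : Fin n → Fin n → ℝ → ℝ)
    (hg0 : ∀ i j, g i j 0 = 0)
    (hgpos : ∀ i j y, 0 < y → 0 < g i j y)
    (hgC1 : ∀ i j, ContDiffOn ℝ 1 (g i j) (Set.Ici (0 : ℝ)))
    (hdyn : ∀ i t, HasDerivAt (fun s => v s i)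
      (∑ j ∈ N t i,
        (-(g i j ‖v t i - v t j‖ / ‖v t i - v t j‖)) • (v t i - v t j)) t) :
    ∀ t ≥ (0 : ℝ), ∀ δ > (0 : ℝ),
      convexHull ℝ (Set.range (v (t + δ))) ⊆ convexHull ℝ (Set.range (v t)) := by
  intro t ht δ hδ
  rcases isEmpty_or_nonempty (Fin n) with hE | hNE
  · rw [Set.range_eq_empty (v (t + δ))]
    simp
  apply convexHull_min _ (convex_convexHull ℝ _)
  rintro _ ⟨i, rfl⟩
  by_contra hmem
  have hKclosed : IsClosed (convexHull ℝ (Set.range (v t))) :=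
    (Set.finite_range (v t)).isClosed_convexHull (𝕜 := ℝ)
  obtain ⟨f, c, hc1, hc2⟩ :=
    geometric_hahn_banach_closed_point (convex_convexHull ℝ _) hKclosed hmem
  -- The sup of `f ∘ v · j` is non-increasing
  have hsup : (univ : Finset (Fin n)).sup' univ_nonempty (fun j => f (v (t + δ) j)) ≤
      (univ : Finset (Fin n)).sup' univ_nonempty (fun j => f (v t j)) := by
    apply sup'_le_of_deriv_nonpos_at_max univ univ_nonempty
      (fun j s => f (v s j))
      (fun j s => f (∑ k ∈ N s j,
        (-(g j k ‖v s j - v s k‖ / ‖v s j - v s k‖)) • (v s j - v s k)))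
      (fun j s => f.hasFDerivAt.comp_hasDerivAt s (hdyn j s))
      _ (by linarith)
    intro x i _ himax
    rw [map_sum]
    apply Finset.sum_nonpos
    intro j hj
    rw [map_smul, smul_eq_mul]
    have hcoef : 0 ≤ g i j ‖v x i - v x j‖ / ‖v x i - v x j‖ := by
      rcases eq_or_lt_of_le (norm_nonneg (v x i - v x j)) with h0 | hpos
      · rw [← h0, hg0]; simp
      · exact le_of_lt (div_pos (hgpos i j _ hpos) hpos)
    have hfd : 0 ≤ f (v x i - v x j) := by
      rw [map_sub, sub_nonneg]
      exact himax j (Finset.mem_univ j)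
    have := mul_nonneg hcoef hfd
    nlinarith
  -- derive contradiction
  obtain ⟨j₀, _, hj₀⟩ := Finset.exists_mem_eq_sup' univ_nonempty (fun j => f (v t j))
  have h1 : f (v (t + δ) i) ≤ (univ : Finset (Fin n)).sup' univ_nonempty
      (fun j => f (v (t + δ) j)) :=
    Finset.le_sup' (fun j => f (v (t + δ) j)) (Finset.mem_univ i)
  have h2 : f (v t j₀) < c :=
    hc1 _ (subset_convexHull ℝ _ (Set.mem_range_self j₀))
  rw [hj₀] at hsup
  linarith
end

section
/- Under the velocity coordination dynamics with all states confined to an interval (Δ₁−ε, Δ₂+ε) for t ≥ t_k, and with each g_{ij} being C¹ with g_{ij}(0)=0, there exists a constant γ > 0 such that for every agent i and all t ≥ t_k, v̇_i(t) ≤ γ(Δ₂ + ε − v_i(t)). -/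
open Finset

/-- A `C¹` function on `[0,∞)` vanishing at `0` is linearly bounded on `[0,M]`. -/
lemma lin_bound (f : ℝ → ℝ) (hf : ContDiffOn ℝ 1 f (Set.Ici (0:ℝ))) (hf0 : f 0 = 0)
    (M : ℝ) (hM : 0 < M) :
    ∃ K : ℝ, 0 ≤ K ∧ ∀ y ∈ Set.Icc (0:ℝ) M, f y ≤ K * y := by
  have hcont : ContinuousOn (derivWithin f (Set.Ici (0:ℝ))) (Set.Icc 0 M) :=
    (hf.continuousOn_derivWithin (uniqueDiffOn_Ici 0) le_rfl).mono Set.Icc_subset_Ici_self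
  obtain ⟨B, hB⟩ := (isCompact_Icc).exists_bound_of_continuousOn hcont
  set C : NNReal := ⟨max B 0, le_max_right _ _⟩ with hC
  have hdiff : DifferentiableOn ℝ f (Set.Icc (0:ℝ) M) :=
    (hf.differentiableOn one_ne_zero).mono Set.Icc_subset_Ici_self
  have hlip : LipschitzOnWith C f (Set.Icc (0:ℝ) M) := by
    apply (convex_Icc (0:ℝ) M).lipschitzOnWith_of_nnnorm_derivWithin_le hdiff
    intro x hx
    have heq : derivWithin f (Set.Icc (0:ℝ) M) x = derivWithin f (Set.Ici (0:ℝ)) x := by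
      apply derivWithin_subset Set.Icc_subset_Ici_self ((uniqueDiffOn_Icc hM) x hx)
      exact (hf.differentiableOn one_ne_zero) x (Set.Icc_subset_Ici_self hx)
    rw [← NNReal.coe_le_coe]
    simp only [coe_nnnorm, heq]
    exact le_trans (hB x hx) (le_max_left _ _)
  refine ⟨C, C.coe_nonneg, fun y hy => ?_⟩
  have h0 : (0:ℝ) ∈ Set.Icc (0:ℝ) M := ⟨le_rfl, hM.le⟩
  have := hlip.dist_le_mul y hy 0 h0
  rw [Real.dist_eq, Real.dist_eq, hf0, sub_zero, sub_zero, abs_of_nonneg hy.1] at this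
  exact (le_abs_self _).trans this

/-- Upper bound on the drift: if all states are confined to `(Δ₁−ε, Δ₂+ε)` for
`t ≥ t_k` and each `gᵢⱼ` is C¹ with `gᵢⱼ(0) = 0`, then there is `γ > 0` with
`v̇ᵢ(t) ≤ γ(Δ₂ + ε − vᵢ(t))` for every agent `i` and all `t ≥ t_k`. -/
theorem drift_upper_bound
    (n : ℕ) (v : ℝ → Fin n → ℝ) (v' : ℝ → Fin n → ℝ)
    (N : ℝ → Fin n → Finset (Fin n))
    (g : Fin n → Fin n → ℝ → ℝ)
    (Δ₁ Δ₂ ε t_k : ℝ) (hε : 0 < ε) (hΔ : Δ₁ ≤ Δ₂)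
    (hg0 : ∀ i j, g i j 0 = 0)
    (hgnonneg : ∀ i j y, 0 ≤ y → 0 ≤ g i j y)
    (hgC1 : ∀ i j, ContDiffOn ℝ 1 (g i j) (Set.Ici (0 : ℝ)))
    (hconf : ∀ i, ∀ t ≥ t_k, v t i ∈ Set.Ioo (Δ₁ - ε) (Δ₂ + ε))
    (hdyn : ∀ i, ∀ t ≥ t_k, HasDerivAt (fun s => v s i) (v' t i) t)
    (hform : ∀ i, ∀ t ≥ t_k,
      v' t i = ∑ j ∈ N t i, g i j |v t j - v t i| * Real.sign (v t j - v t i)) :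
    ∃ γ > (0 : ℝ), ∀ i, ∀ t ≥ t_k, v' t i ≤ γ * (Δ₂ + ε - v t i) := by
  set M : ℝ := Δ₂ - Δ₁ + 2 * ε with hMdef
  have hM : 0 < M := by
    have : 0 ≤ Δ₂ - Δ₁ := by linarith
    linarith
  have hKex : ∀ i j : Fin n, ∃ K : ℝ, 0 ≤ K ∧ ∀ y ∈ Set.Icc (0:ℝ) M, g i j y ≤ K * y :=
    fun i j => lin_bound (g i j) (hgC1 i j) (hg0 i j) M hM
  choose K hK0 hKle using hKex
  obtain ⟨K0, hK0'⟩ : ∃ K0 : ℝ, ∀ p : Fin n × Fin n, K p.1 p.2 ≤ K0 := Finite.exists_le _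
  set Km : ℝ := max K0 0 with hKm
  have hKm0 : 0 ≤ Km := le_max_right _ _
  have hKij : ∀ i j, K i j ≤ Km := fun i j => (hK0' (i, j)).trans (le_max_left _ _)
  refine ⟨n * Km + 1, by positivity, fun i t ht => ?_⟩
  have hDpos : 0 < Δ₂ + ε - v t i := by
    have := (hconf i t ht).2; linarith
  rw [hform i t ht]
  have hterm : ∀ j ∈ N t i,
      g i j |v t j - v t i| * Real.sign (v t j - v t i) ≤ Km * (Δ₂ + ε - v t i) := by
    intro j _
    rcases lt_trichotomy (v t j) (v t i) with h | h | h
    · have hneg : v t j - v t i < 0 := by linarith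
      rw [Real.sign_of_neg hneg]
      have : 0 ≤ g i j |v t j - v t i| := hgnonneg i j _ (abs_nonneg _)
      nlinarith [mul_nonneg hKm0 hDpos.le]
    · simp [h]
      positivity
    · have hpos : 0 < v t j - v t i := by linarith
      rw [Real.sign_of_pos hpos, mul_one, abs_of_pos hpos]
      have hyM : v t j - v t i ∈ Set.Icc (0:ℝ) M := by
        constructor
        · linarith
        · have h1 := (hconf j t ht).2
          have h2 := (hconf i t ht).1
          simp only [hMdef]; linarith
      have h1 : g i j (v t j - v t i) ≤ K i j * (v t j - v t i) := hKle i j _ hyM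
      have h2 : v t j - v t i ≤ Δ₂ + ε - v t i := by
        have := (hconf j t ht).2; linarith
      calc g i j (v t j - v t i) ≤ K i j * (v t j - v t i) := h1
        _ ≤ Km * (Δ₂ + ε - v t i) := by
            have := hKij i j
            nlinarith
  calc (∑ j ∈ N t i, g i j |v t j - v t i| * Real.sign (v t j - v t i))
      ≤ ∑ _j ∈ N t i, Km * (Δ₂ + ε - v t i) := Finset.sum_le_sum hterm
    _ = (N t i).card * (Km * (Δ₂ + ε - v t i)) := by rw [Finset.sum_const, nsmul_eq_mul]
    _ ≤ n * (Km * (Δ₂ + ε - v t i)) := by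
        have hcard : ((N t i).card : ℝ) ≤ n := by
          have := Finset.card_le_univ (N t i)
          simp only [Fintype.card_fin] at this
          exact_mod_cast this
        exact mul_le_mul_of_nonneg_right hcard (by positivity)
    _ ≤ (n * Km + 1) * (Δ₂ + ε - v t i) := by nlinarith
end
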